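/- The image of the injective algebra map φ̄: U^{n−1} → U^n (sending u_{ij} to v_{ijn}) equals the subalgebra V^n of U^n generated by all elements v_{ijk} = u_{ij} + u_{jk} + u_{ki} for triples of distinct indices 1 ≤ i, j, k ≤ n. In particular, for distinct i, j, k ≤ n−1 one has v_{ijk} = v_{ijn} − v_{ikn} + v_{jkn}. -/

import Mathlib

open MvPolynomial

noncomputable def uVar {n : ℕ} (i j : Fin n) (h : i ≠ j) :
    MvPolynomial {p : Fin n × Fin n // p.1 ≠ p.2} ℚ :=
  X ⟨(i, j), h⟩

/-- The defining ideal of the ring `U^n`. -/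
noncomputable def uIdeal (n : ℕ) : Ideal (MvPolynomial {p : Fin n × Fin n // p.1 ≠ p.2} ℚ) :=
  Ideal.span { q | (∃ (i j : Fin n) (h : i ≠ j), q = uVar i j h * uVar i j h)
    ∨ (∃ (i j : Fin n) (h : i ≠ j), q = uVar i j h + uVar j i h.symm)
    ∨ (∃ (i j k : Fin n) (hij : i ≠ j) (hjk : j ≠ k) (hki : k ≠ i),
        q = uVar i j hij * uVar j k hjk + uVar j k hjk * uVar k i hki
          + uVar k i hki * uVar i j hij) }

/-- The ring `U^n = ℚ[u_{ij} : i ≠ j] / I`. -/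
abbrev URing (n : ℕ) := MvPolynomial {p : Fin n × Fin n // p.1 ≠ p.2} ℚ ⧸ uIdeal n

noncomputable def u {n : ℕ} (i j : Fin n) (h : i ≠ j) : URing n :=
  Ideal.Quotient.mk (uIdeal n) (uVar i j h)

noncomputable def v {n : ℕ} (i j k : Fin n) (hij : i ≠ j) (hjk : j ≠ k) (hki : k ≠ i) :
    URing n :=
  u i j hij + u j k hjk + u k i hki

/-- The algebra map `φ : ℚ[u_{ij} : i ≠ j ≤ n-1] → ℚ[u_{ij} : i ≠ j ≤ n]`
sending `u_{ij} ↦ v_{ijn} = u_{ij} + u_{jn} + u_{ni}` (here with `n-1` replaced by `n`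
and `n` by `n+1`, so the last index plays the role of `n`). -/
noncomputable def phiMap (n : ℕ) :
    MvPolynomial {p : Fin n × Fin n // p.1 ≠ p.2} ℚ →ₐ[ℚ]
      MvPolynomial {p : Fin (n + 1) × Fin (n + 1) // p.1 ≠ p.2} ℚ :=
  aeval fun q =>
    uVar (Fin.castSucc q.1.1) (Fin.castSucc q.1.2)
        (fun h => q.2 (Fin.castSucc_injective n h))
      + uVar (Fin.castSucc q.1.2) (Fin.last n) (Fin.castSucc_lt_last _).ne
      + uVar (Fin.last n) (Fin.castSucc q.1.1) (Fin.castSucc_lt_last _).ne'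

/-- The subalgebra `V^n ⊆ U^n` generated by all `v_{ijk}` for distinct `i, j, k`. -/
noncomputable def Vsub (n : ℕ) : Subalgebra ℚ (URing n) :=
  Algebra.adjoin ℚ
    { x | ∃ (i j k : Fin n) (hij : i ≠ j) (hjk : j ≠ k) (hki : k ≠ i),
        x = v i j k hij hjk hki }


lemma u_add {m : ℕ} (i j : Fin m) (h : i ≠ j) : u i j h + u j i h.symm = 0 := by
  rw [u, u, ← map_add, Ideal.Quotient.eq_zero_iff_mem]
  exact Ideal.subset_span (Or.inr (Or.inl ⟨i, j, h, rfl⟩))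

lemma v_cyclic {m : ℕ} (i j k : Fin m) (hij : i ≠ j) (hjk : j ≠ k) (hki : k ≠ i) :
    v i j k hij hjk hki = v j k i hjk hki hij := by
  simp only [v]; ring

lemma v_key {m : ℕ} (i j k l : Fin m) (hij : i ≠ j) (hjk : j ≠ k) (hki : k ≠ i)
    (hil : i ≠ l) (hjl : j ≠ l) (hkl : k ≠ l) :
    v i j k hij hjk hki = v i j l hij hjl hil.symm - v i k l hki.symm hkl hil.symm
      + v j k l hjk hkl hjl.symm := by
  simp only [v]
  linear_combination u_add k i hki - u_add j l hjl

/-- The image of the injective algebra map `φ̄ : U^{n-1} → U^n` (induced by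
`u_{ij} ↦ v_{ijn}`) equals the subalgebra `V^n` generated by the `v_{ijk}`; in particular,
for distinct `i, j, k ≤ n-1`, `v_{ijk} = v_{ijn} − v_{ikn} + v_{jkn}`. -/
theorem phi_image_eq_Vsub (n : ℕ) (hn : 2 ≤ n) :
    ({ x : URing (n + 1) |
        ∃ p : MvPolynomial {p : Fin n × Fin n // p.1 ≠ p.2} ℚ,
          x = Ideal.Quotient.mk (uIdeal (n + 1)) (phiMap n p) }
      = (Vsub (n + 1) : Set (URing (n + 1)))) ∧
    ∀ (i j k : Fin n) (hij : i ≠ j) (hjk : j ≠ k) (hki : k ≠ i),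
      v (Fin.castSucc i) (Fin.castSucc j) (Fin.castSucc k)
          (fun h => hij (Fin.castSucc_injective n h))
          (fun h => hjk (Fin.castSucc_injective n h))
          (fun h => hki (Fin.castSucc_injective n h))
        = v (Fin.castSucc i) (Fin.castSucc j) (Fin.last n)
            (fun h => hij (Fin.castSucc_injective n h))
            (Fin.castSucc_lt_last _).ne (Fin.castSucc_lt_last _).ne'
          - v (Fin.castSucc i) (Fin.castSucc k) (Fin.last n)
              (fun h => hki (Fin.castSucc_injective n h).symm)
              (Fin.castSucc_lt_last _).ne (Fin.castSucc_lt_last _).ne'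
          + v (Fin.castSucc j) (Fin.castSucc k) (Fin.last n)
              (fun h => hjk (Fin.castSucc_injective n h))
              (Fin.castSucc_lt_last _).ne (Fin.castSucc_lt_last _).ne' := by
  set f : {p : Fin n × Fin n // p.1 ≠ p.2} → URing (n + 1) := fun q =>
    v (Fin.castSucc q.1.1) (Fin.castSucc q.1.2) (Fin.last n)
      (fun h => q.2 (Fin.castSucc_injective n h))
      (Fin.castSucc_lt_last _).ne (Fin.castSucc_lt_last _).ne' with hf
  constructor
  · have hcomp : ∀ p, Ideal.Quotient.mk (uIdeal (n + 1)) (phiMap n p) = aeval f p := by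
      intro p
      have h1 : (Ideal.Quotient.mkₐ ℚ (uIdeal (n + 1))).comp (phiMap n) = aeval f := by
        rw [phiMap, comp_aeval]
        rfl
      calc Ideal.Quotient.mk (uIdeal (n + 1)) (phiMap n p)
          = ((Ideal.Quotient.mkₐ ℚ (uIdeal (n + 1))).comp (phiMap n)) p := rfl
        _ = aeval f p := by rw [h1]
    have hset : { x : URing (n + 1) |
        ∃ p : MvPolynomial {p : Fin n × Fin n // p.1 ≠ p.2} ℚ,
          x = Ideal.Quotient.mk (uIdeal (n + 1)) (phiMap n p) }
        = ((aeval f : MvPolynomial _ ℚ →ₐ[ℚ] URing (n + 1)).range : Set (URing (n + 1))) := by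
      ext x
      simp only [Set.mem_setOf_eq, SetLike.mem_coe, AlgHom.mem_range]
      constructor
      · rintro ⟨p, rfl⟩; exact ⟨p, (hcomp p).symm⟩
      · rintro ⟨p, rfl⟩; exact ⟨p, (hcomp p).symm⟩
    rw [hset, ← Algebra.adjoin_range_eq_range_aeval]
    congr 1
    apply le_antisymm
    · apply Algebra.adjoin_mono
      rintro x ⟨q, rfl⟩
      exact ⟨_, _, _, _, _, _, rfl⟩
    · apply Algebra.adjoin_le
      rintro x ⟨i, j, k, hij, hjk, hki, rfl⟩
      have hmem : ∀ (a b : Fin n) (h : Fin.castSucc a ≠ Fin.castSucc b)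
          (h2 : Fin.castSucc b ≠ Fin.last n) (h3 : Fin.last n ≠ Fin.castSucc a),
          v (Fin.castSucc a) (Fin.castSucc b) (Fin.last n) h h2 h3
            ∈ Algebra.adjoin ℚ (Set.range f) := fun a b h h2 h3 =>
        Algebra.subset_adjoin ⟨⟨(a, b), fun e => h (congrArg Fin.castSucc e)⟩, rfl⟩
      rcases eq_or_ne i (Fin.last n) with rfl | hi
      · obtain ⟨j', rfl⟩ := Fin.exists_castSucc_eq.mpr hij.symm
        obtain ⟨k', rfl⟩ := Fin.exists_castSucc_eq.mpr hki
        rw [v_cyclic]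
        exact hmem _ _ _ _ _
      · obtain ⟨i', rfl⟩ := Fin.exists_castSucc_eq.mpr hi
        rcases eq_or_ne j (Fin.last n) with rfl | hj
        · obtain ⟨k', rfl⟩ := Fin.exists_castSucc_eq.mpr hjk.symm
          rw [v_cyclic, v_cyclic]
          exact hmem _ _ _ _ _
        · obtain ⟨j', rfl⟩ := Fin.exists_castSucc_eq.mpr hj
          rcases eq_or_ne k (Fin.last n) with rfl | hk
          · exact hmem _ _ _ _ _
          · obtain ⟨k', rfl⟩ := Fin.exists_castSucc_eq.mpr hk
            rw [v_key _ _ _ (Fin.last n) hij hjk hki (Fin.castSucc_lt_last _).ne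
              (Fin.castSucc_lt_last _).ne (Fin.castSucc_lt_last _).ne]
            exact add_mem (sub_mem (hmem _ _ _ _ _) (hmem _ _ _ _ _)) (hmem _ _ _ _ _)
  · intro i j k hij hjk hki
    exact v_key (Fin.castSucc i) (Fin.castSucc j) (Fin.castSucc k) (Fin.last n)
      (fun h => hij (Fin.castSucc_injective n h))
      (fun h => hjk (Fin.castSucc_injective n h))
      (fun h => hki (Fin.castSucc_injective n h))
      (Fin.castSucc_lt_last _).ne (Fin.castSucc_lt_last _).ne (Fin.castSucc_lt_last _).ne
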